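/- River satisfies independence of quasi-Pareto-dominated alternatives on uniquely weighted profiles: for every uniquely weighted preference profile P and alternatives a, b ∈ A(P) such that b quasi-Pareto-dominates a, RV(P) = RV(P_{−a}). -/

import Mathlib

/-! ## Preference profiles -/

/-- A preference profile: a finite set of voters, a finite set of alternatives,
and for each voter a (Boolean-valued) preference relation, `pref i x y` meaning
voter `i` ranks `x` above `y`. -/
structure Profile (ν α : Type) where
  voters : Finset ν
  alts : Finset α
  pref : ν → α → α → Bool

namespace Profile

variable {ν α : Type}

/-- A profile is valid if there is at least one voter, at least two alternatives,
and every voter's preference is a strict linear order on the alternatives. -/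
def Valid (P : Profile ν α) : Prop :=
  P.voters.Nonempty ∧ 2 ≤ P.alts.card ∧
  (∀ i ∈ P.voters, ∀ a ∈ P.alts, ¬ P.pref i a a) ∧
  (∀ i ∈ P.voters, ∀ a ∈ P.alts, ∀ b ∈ P.alts, ∀ c ∈ P.alts,
      P.pref i a b → P.pref i b c → P.pref i a c) ∧
  (∀ i ∈ P.voters, ∀ a ∈ P.alts, ∀ b ∈ P.alts, a ≠ b → (P.pref i a b ↔ ¬ P.pref i b a))

/-- The majority margin of `x` over `y`. -/
def margin (P : Profile ν α) (x y : α) : ℤ :=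
  ((P.voters.filter (fun i => P.pref i x y)).card : ℤ) -
    ((P.voters.filter (fun i => P.pref i y x)).card : ℤ)

/-- The restriction of a profile to the alternatives other than `x`. -/
def restrict [DecidableEq α] (P : Profile ν α) (x : α) : Profile ν α :=
  ⟨P.voters, P.alts.erase x, P.pref⟩

/-- `y` Pareto-dominates `x`: every voter ranks `y` above `x`,
i.e. the margin of `y` over `x` equals the number of voters. -/
def ParetoDominates (P : Profile ν α) (y x : α) : Prop :=
  P.margin y x = P.voters.card

/-- A profile is uniquely weighted if no margin between distinct alternatives is zero and
distinct ordered pairs of distinct alternatives have distinct margins. -/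
def UniquelyWeighted (P : Profile ν α) : Prop :=
  (∀ x ∈ P.alts, ∀ y ∈ P.alts, x ≠ y → P.margin x y ≠ 0) ∧
  (∀ x ∈ P.alts, ∀ y ∈ P.alts, ∀ v ∈ P.alts, ∀ w ∈ P.alts,
      x ≠ y → v ≠ w → (x, y) ≠ (v, w) → P.margin x y ≠ P.margin v w)

end Profile

/-! ## Lists, precedence, tiebreakers -/

/-- `e` precedes `f` in the list `L`. -/
def Precedes {β : Type} (L : List β) (e f : β) : Prop :=
  ∃ l₁ l₂ l₃ : List β, L = l₁ ++ e :: (l₂ ++ f :: l₃)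

/-- A tiebreaker for a profile `P`: a linear order (list) of all ordered pairs of distinct
alternatives with nonnegative margin, in which pairs with strictly larger margin come first. -/
def IsTiebreaker {ν α : Type} (P : Profile ν α) (L : List (α × α)) : Prop :=
  L.Nodup ∧
  (∀ e : α × α, e ∈ L ↔ e.1 ∈ P.alts ∧ e.2 ∈ P.alts ∧ e.1 ≠ e.2 ∧ 0 ≤ P.margin e.1 e.2) ∧
  L.Pairwise (fun e f => P.margin f.1 f.2 ≤ P.margin e.1 e.2)

/-! ## The River method -/

open Classical in
/-- The River diagram: process the edges in the order given by `L`, adding an edge unless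
it would create a directed cycle or a second incoming edge at its target. -/
noncomputable def riverDiagram {α : Type} (L : List (α × α)) : Finset (α × α) :=
  L.foldl (fun E e =>
    if (∃ f ∈ E, f.2 = e.2) ∨ Relation.ReflTransGen (fun a b => (a, b) ∈ E) e.2 e.1
    then E else insert e E) ∅

open Classical in
/-- The River winners: the sources (vertices with no incoming edge) of the River diagram. -/
noncomputable def riverWinners {ν α : Type} (P : Profile ν α) (L : List (α × α)) : Finset α :=
  P.alts.filter (fun x => ∀ f ∈ riverDiagram L, f.2 ≠ x)

/-! ## Split Cycle -/

/-- The (cyclically) consecutive edges of a cycle given by a list of distinct vertices. -/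
def cycleEdges {α : Type} (c : List α) : List (α × α) := c.zip (c.rotate 1)

/-- A majority cycle: a cycle of distinct alternatives all of whose edges have positive margin. -/
def IsMajorityCycle {ν α : Type} (P : Profile ν α) (c : List α) : Prop :=
  c.Nodup ∧ (∀ a ∈ c, a ∈ P.alts) ∧ ∀ e ∈ cycleEdges c, 0 < P.margin e.1 e.2

/-- `e` is a splitting edge of some majority cycle: it attains the minimum margin on the cycle. -/
def IsSplittingEdge {ν α : Type} (P : Profile ν α) (e : α × α) : Prop :=
  ∃ c : List α, IsMajorityCycle P c ∧ e ∈ cycleEdges c ∧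
    ∀ f ∈ cycleEdges c, P.margin e.1 e.2 ≤ P.margin f.1 f.2

open Classical in
/-- The Split Cycle winners: alternatives with no incoming edge in the Split Cycle diagram,
whose edges are the positive-margin pairs that are not splitting edges of any majority cycle. -/
noncomputable def splitCycleWinners {ν α : Type} (P : Profile ν α) : Finset α :=
  P.alts.filter (fun x => ¬ ∃ y ∈ P.alts, 0 < P.margin y x ∧ ¬ IsSplittingEdge P (y, x))

/-! ## Ranked Pairs -/

/-- A processing order for Ranked Pairs: all pairs with positive margin,
ordered by decreasing margin. -/
def IsRPOrder {ν α : Type} (P : Profile ν α) (L : List (α × α)) : Prop :=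
  L.Nodup ∧
  (∀ e : α × α, e ∈ L ↔ e.1 ∈ P.alts ∧ e.2 ∈ P.alts ∧ 0 < P.margin e.1 e.2) ∧
  L.Pairwise (fun e f => P.margin f.1 f.2 ≤ P.margin e.1 e.2)

open Classical in
/-- The Ranked Pairs diagram: add each edge in order unless it would create a directed cycle. -/
noncomputable def rpDiagram {α : Type} (L : List (α × α)) : Finset (α × α) :=
  L.foldl (fun E e =>
    if Relation.ReflTransGen (fun a b => (a, b) ∈ E) e.2 e.1 then E else insert e E) ∅

open Classical in
/-- The Ranked Pairs winners: sources of the Ranked Pairs diagram. -/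
noncomputable def rpWinners {ν α : Type} (P : Profile ν α) (L : List (α × α)) : Finset α :=
  P.alts.filter (fun x => ∀ f ∈ rpDiagram L, f.2 ≠ x)

/-! ## Beat Path -/

/-- A majority path: a sequence of distinct alternatives with positive margins along it. -/
def IsMajorityPath {ν α : Type} (P : Profile ν α) (p : List α) : Prop :=
  p.Nodup ∧ (∀ a ∈ p, a ∈ P.alts) ∧ p.Chain' (fun a b => 0 < P.margin a b)

/-- `s_P(x,y)`: the maximum strength (minimum margin along the path) of a majority path
from `x` to `y`, and `0` if there is no such path. -/
noncomputable def beatPathStrength {ν α : Type} (P : Profile ν α) (x y : α) : ℤ :=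
  sSup ({0} ∪ {s : ℤ | ∃ p : List α, IsMajorityPath P p ∧ p.head? = some x ∧
    p.getLast? = some y ∧ ((p.zip p.tail).map (fun e => P.margin e.1 e.2)).min? = some s})

open Classical in
/-- The Beat Path winners. -/
noncomputable def beatPathWinners {ν α : Type} (P : Profile ν α) : Finset α :=
  P.alts.filter (fun x => ∀ y ∈ P.alts, y ≠ x →
    beatPathStrength P y x ≤ beatPathStrength P x y)

/-! ## Stable Voting -/

/-- Auxiliary, fuel-based definition of Stable Voting (for uniquely weighted profiles).
If only one alternative remains it wins; otherwise the winner is the alternative `x` of the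
first pair `(x,y)` (ordered by decreasing margin) with `m(x,y) > 0` and `x` a Split Cycle
winner, such that `x` is a Stable Voting winner of the profile without `y`. -/
noncomputable def svAux {ν α : Type} [DecidableEq α] : ℕ → Profile ν α → Set α
  | 0, P => ↑P.alts
  | (n+1), P =>
      if P.alts.card ≤ 1 then ↑P.alts
      else {x | x ∈ P.alts ∧ ∃ y ∈ P.alts, 0 < P.margin x y ∧ x ∈ splitCycleWinners P ∧
        x ∈ svAux n (P.restrict y) ∧
        ∀ x' ∈ P.alts, ∀ y' ∈ P.alts, 0 < P.margin x' y' → x' ∈ splitCycleWinners P →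
          P.margin x y < P.margin x' y' → x' ∉ svAux n (P.restrict y')}

/-- The Stable Voting winners (for uniquely weighted profiles). -/
noncomputable def svWinners {ν α : Type} [DecidableEq α] (P : Profile ν α) : Set α :=
  svAux P.alts.card P

/-! ## Smith set, covering, quasi-Pareto domination -/

/-- A dominant set of alternatives: nonempty, and each member defeats every non-member. -/
def IsDominant {ν α : Type} (P : Profile ν α) (X : Finset α) : Prop :=
  X.Nonempty ∧ X ⊆ P.alts ∧ ∀ x ∈ X, ∀ y ∈ P.alts, y ∉ X → 0 < P.margin x y

/-- The Smith set: the inclusion-minimal dominant set. -/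
def IsSmithSet {ν α : Type} (P : Profile ν α) (S : Finset α) : Prop :=
  IsDominant P S ∧ ∀ X : Finset α, IsDominant P X → S ⊆ X

/-- `y` covers `x`: `y` defeats `x` and does at least as well against every third alternative. -/
def Covers {ν α : Type} (P : Profile ν α) (y x : α) : Prop :=
  0 < P.margin y x ∧ ∀ z ∈ P.alts, z ≠ x → z ≠ y → P.margin x z ≤ P.margin y z

/-- `y` quasi-Pareto-dominates `x`. -/
def QuasiParetoDominates {ν α : Type} (P : Profile ν α) (y x : α) : Prop :=
  Covers P y x ∧ ∀ z ∈ P.alts, z ≠ x → z ≠ y →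
    P.margin z x ≤ P.margin y x ∧ P.margin x z ≤ P.margin y x

/-! ## Tiebreaker functions -/

/-- A consistent tiebreaker function: it assigns a tiebreaker to every profile, and the relative
order of two edges not involving `x` is unchanged when `x` is removed from the profile. -/
def IsConsistentTBF {ν α : Type} [DecidableEq α] (T : Profile ν α → List (α × α)) : Prop :=
  (∀ P : Profile ν α, IsTiebreaker P (T P)) ∧
  ∀ (P : Profile ν α) (x a b c d : α), x ∈ P.alts →
    x ≠ a → x ≠ b → x ≠ c → x ≠ d →
    (a, b) ∈ T P → (c, d) ∈ T P →
    (Precedes (T P) (a, b) (c, d) ↔ Precedes (T (P.restrict x)) (a, b) (c, d))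

/-- A Pareto-consistent tiebreaker function: consistent, and whenever `y` Pareto-dominates `x`,
the edge `(y,z)` precedes the edge `(x,z)` for every third alternative `z`. -/
def IsParetoConsistentTBF {ν α : Type} [DecidableEq α]
    (T : Profile ν α → List (α × α)) : Prop :=
  IsConsistentTBF T ∧
  ∀ (P : Profile ν α) (x y z : α), P.ParetoDominates y x →
    z ≠ x → z ≠ y → (y, z) ∈ T P → (x, z) ∈ T P → Precedes (T P) (y, z) (x, z)

/-- A quasi-Pareto-consistent tiebreaker function. -/
def IsQuasiParetoConsistentTBF {ν α : Type} [DecidableEq α]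
    (T : Profile ν α → List (α × α)) : Prop :=
  IsParetoConsistentTBF T ∧
  (∀ (P : Profile ν α) (x y y' : α),
      P.margin y x = P.margin y' x → QuasiParetoDominates P y x →
      ¬ QuasiParetoDominates P y' x →
      (y, x) ∈ T P → (y', x) ∈ T P → Precedes (T P) (y, x) (y', x)) ∧
  (∀ (P : Profile ν α) (x y z : α), QuasiParetoDominates P y x →
      ((x, z) ∈ T P → (y, z) ∈ T P → Precedes (T P) (y, z) (x, z)) ∧
      ((x, z) ∈ T P → (y, x) ∈ T P → Precedes (T P) (y, x) (x, z)))

/-- A tiebreaker for `P` induced by the fixed tie-breaking order `r` on pairs: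
edges are ordered by decreasing margin, ties in margin broken according to `r`. -/
def IsTiebreakerVia {ν α : Type} (r : α × α → α × α → Prop) (P : Profile ν α)
    (L : List (α × α)) : Prop :=
  IsTiebreaker P L ∧ ∀ e f : α × α, Precedes L e f →
    P.margin f.1 f.2 < P.margin e.1 e.2 ∨ (P.margin e.1 e.2 = P.margin f.1 f.2 ∧ r e f)

/-! ## STATEMENT 10: River satisfies independence of quasi-Pareto-dominated alternatives on
uniquely weighted profiles (all tiebreakers induce the same processing order there, so we
quantify over all tiebreakers for `P` and for `P` without `a`) -/

section RiverAux

open Classical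

variable {α : Type}

/-- One step of the River processing. -/
noncomputable def rstep (E : Finset (α × α)) (e : α × α) : Finset (α × α) :=
  if (∃ f ∈ E, f.2 = e.2) ∨ Relation.ReflTransGen (fun a b => (a, b) ∈ E) e.2 e.1
  then E else insert e E

lemma riverDiagram_eq_foldl (L : List (α × α)) :
    riverDiagram L = L.foldl rstep ∅ := rfl

lemma rstep_pos {E : Finset (α × α)} {e : α × α}
    (h : (∃ f ∈ E, f.2 = e.2) ∨ Relation.ReflTransGen (fun p q => (p, q) ∈ E) e.2 e.1) :
    rstep E e = E := if_pos h

lemma rstep_neg {E : Finset (α × α)} {e : α × α}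
    (h : ¬ ((∃ f ∈ E, f.2 = e.2) ∨ Relation.ReflTransGen (fun p q => (p, q) ∈ E) e.2 e.1)) :
    rstep E e = insert e E := if_neg h

lemma subset_rstep (E : Finset (α × α)) (e : α × α) : E ⊆ rstep E e := by
  unfold rstep; split_ifs
  · exact subset_rfl
  · exact Finset.subset_insert _ _

lemma rstep_subset (E : Finset (α × α)) (e : α × α) : rstep E e ⊆ insert e E := by
  unfold rstep; split_ifs
  · exact Finset.subset_insert _ _
  · exact subset_rfl

lemma subset_foldl (l : List (α × α)) : ∀ E : Finset (α × α), E ⊆ l.foldl rstep E := by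
  induction l with
  | nil => intro E; exact subset_rfl
  | cons e t ih => intro E; exact (subset_rstep E e).trans (ih _)

lemma mem_foldl (l : List (α × α)) :
    ∀ (E : Finset (α × α)) (f : α × α), f ∈ l.foldl rstep E → f ∈ E ∨ f ∈ l := by
  induction l with
  | nil => intro E f h; exact Or.inl h
  | cons e t ih =>
    intro E f h
    rcases ih (rstep E e) f h with h' | h'
    · rcases Finset.mem_insert.mp (rstep_subset E e h') with rfl | h''
      · exact Or.inr (List.mem_cons_self)
      · exact Or.inl h''
    · exact Or.inr (List.mem_cons_of_mem _ h')

lemma blocked_mono {E F : Finset (α × α)} (h : E ⊆ F) {z t : α} :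
    ((∃ f ∈ E, f.2 = z) ∨ Relation.ReflTransGen (fun p q => (p, q) ∈ E) z t) →
    ((∃ f ∈ F, f.2 = z) ∨ Relation.ReflTransGen (fun p q => (p, q) ∈ F) z t) := by
  rintro (⟨f, hf, hfz⟩ | hr)
  · exact Or.inl ⟨f, h hf, hfz⟩
  · exact Or.inr (Relation.ReflTransGen.mono (fun p q hpq => h hpq) _ _ hr)

lemma processed (l : List (α × α)) :
    ∀ (E : Finset (α × α)) (e : α × α), e ∈ l →
      (∃ f ∈ l.foldl rstep E, f.2 = e.2) ∨
        Relation.ReflTransGen (fun p q => (p, q) ∈ l.foldl rstep E) e.2 e.1 := by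
  induction l with
  | nil => intro E e he; exact absurd he List.not_mem_nil
  | cons g t ih =>
    intro E e he
    rw [List.foldl_cons]
    rcases List.mem_cons.mp he with rfl | he'
    · by_cases hc : (∃ f ∈ E, f.2 = e.2) ∨
        Relation.ReflTransGen (fun p q => (p, q) ∈ E) e.2 e.1
      · exact blocked_mono ((subset_rstep E e).trans (subset_foldl t _)) hc
      · refine Or.inl ⟨e, ?_, rfl⟩
        exact subset_foldl t _ ((rstep_neg hc) ▸ Finset.mem_insert_self e E)
    · exact ih (rstep E g) e he'

lemma no_path {E : Finset (α × α)} {a y : α} (hE : ∀ f ∈ E, f.1 ≠ a)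
    (h : Relation.ReflTransGen (fun p q => (p, q) ∈ E) a y) : y = a := by
  rcases h.cases_head with h | ⟨c, hc, _⟩
  · exact h.symm
  · exact absurd rfl (hE _ hc)

lemma rtg_of_insert {E : Finset (α × α)} {a b : α} (hE : ∀ f ∈ E, f.1 ≠ a) (hb : b ≠ a)
    {x y : α} (hy : y ≠ a)
    (h : Relation.ReflTransGen (fun p q => (p, q) ∈ insert (b, a) E) x y) :
    Relation.ReflTransGen (fun p q => (p, q) ∈ E) x y := by
  induction h using Relation.ReflTransGen.head_induction_on with
  | refl => exact Relation.ReflTransGen.refl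
  | head h' hrest ih =>
    rename_i u c
    rcases Finset.mem_insert.mp h' with heq | hmem
    · have hc : c = a := congrArg Prod.snd heq
      subst c
      have hall : ∀ f ∈ insert (b, a) E, f.1 ≠ a := by
        intro f hf
        rcases Finset.mem_insert.mp hf with rfl | hf'
        · exact hb
        · exact hE f hf'
      exact absurd (no_path hall hrest) hy
    · exact Relation.ReflTransGen.head hmem ih

lemma main_fold (m : α × α → ℤ) (a b : α) (hba : b ≠ a) (l : List (α × α)) :
    ∀ D' : Finset (α × α),
      (∀ f ∈ D', f.1 ≠ a ∧ f.2 ≠ a) →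
      l.Pairwise (fun e f => m f < m e) →
      (∀ e ∈ l, e.1 ≠ e.2) →
      (∀ z, (a, z) ∈ l → m (a, z) < m (b, z)) →
      (∀ z, (a, z) ∈ l →
        (b, z) ∈ l ∨ (∃ f ∈ insert (b, a) D', f.2 = z) ∨
          Relation.ReflTransGen (fun p q => (p, q) ∈ insert (b, a) D') z a) →
      l.foldl rstep (insert (b, a) D') =
        insert (b, a) ((l.filter (fun e => decide (e.1 ≠ a ∧ e.2 ≠ a))).foldl rstep D') := by
  induction l with
  | nil => intro D' _ _ _ _ _; rfl
  | cons e t ih =>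
    intro D' hD' hpw hne hm h4
    obtain ⟨e1, e2⟩ := e
    have he12 : e1 ≠ e2 := hne _ (List.mem_cons_self)
    have hmemD : ((b, a) : α × α) ∈ insert (b, a) D' := Finset.mem_insert_self _ _
    by_cases h1 : e1 = a
    · subst e1
      -- the edge (a, e2) is rejected
      have hblock : (∃ f ∈ insert (b, a) D', f.2 = e2) ∨
          Relation.ReflTransGen (fun p q => (p, q) ∈ insert (b, a) D') e2 a := by
        rcases h4 e2 (List.mem_cons_self) with hbz | hbl
        · rcases List.mem_cons.mp hbz with heq | hmem
          · exact absurd (congrArg Prod.fst heq) hba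
          · have h5 := (List.pairwise_cons.mp hpw).1 _ hmem
            have h6 := hm e2 (List.mem_cons_self)
            exact absurd h5 (not_lt.mpr (le_of_lt h6))
        · exact hbl
      have hstep : rstep (insert (b, a) D') (a, e2) = insert (b, a) D' := rstep_pos hblock
      have hfilt : ((a, e2) :: t).filter (fun e => decide (e.1 ≠ a ∧ e.2 ≠ a)) =
          t.filter (fun e => decide (e.1 ≠ a ∧ e.2 ≠ a)) := by simp
      rw [List.foldl_cons, hstep, hfilt]
      refine ih D' hD' (List.pairwise_cons.mp hpw).2
        (fun f hf => hne f (List.mem_cons_of_mem _ hf))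
        (fun z hz => hm z (List.mem_cons_of_mem _ hz)) ?_
      intro z hz
      rcases h4 z (List.mem_cons_of_mem _ hz) with hbz | hbl
      · rcases List.mem_cons.mp hbz with heq | hmem
        · exact absurd (congrArg Prod.fst heq) hba
        · exact Or.inl hmem
      · exact Or.inr hbl
    · by_cases h2 : e2 = a
      · subst e2
        have hstep : rstep (insert (b, a) D') (e1, a) = insert (b, a) D' :=
          rstep_pos (Or.inl ⟨(b, a), hmemD, rfl⟩)
        have hfilt : ((e1, a) :: t).filter (fun e => decide (e.1 ≠ a ∧ e.2 ≠ a)) =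
            t.filter (fun e => decide (e.1 ≠ a ∧ e.2 ≠ a)) := by simp
        rw [List.foldl_cons, hstep, hfilt]
        refine ih D' hD' (List.pairwise_cons.mp hpw).2
          (fun f hf => hne f (List.mem_cons_of_mem _ hf))
          (fun z hz => hm z (List.mem_cons_of_mem _ hz)) ?_
        intro z hz
        have hza : z ≠ a := fun h => (hne _ (List.mem_cons_of_mem _ hz)) (by rw [h])
        rcases h4 z (List.mem_cons_of_mem _ hz) with hbz | hbl
        · rcases List.mem_cons.mp hbz with heq | hmem
          · exact absurd (congrArg Prod.snd heq) hza
          · exact Or.inl hmem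
        · exact Or.inr hbl
      · -- e1 ≠ a, e2 ≠ a
        have hfilt : ((e1, e2) :: t).filter (fun e => decide (e.1 ≠ a ∧ e.2 ≠ a)) =
            (e1, e2) :: t.filter (fun e => decide (e.1 ≠ a ∧ e.2 ≠ a)) := by
          simp [h1, h2]
        have hcond : ((∃ f ∈ insert (b, a) D', f.2 = e2) ∨
            Relation.ReflTransGen (fun p q => (p, q) ∈ insert (b, a) D') e2 e1) ↔
            ((∃ f ∈ D', f.2 = e2) ∨
              Relation.ReflTransGen (fun p q => (p, q) ∈ D') e2 e1) := by
          constructor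
          · rintro (⟨f, hf, hfe⟩ | hr)
            · rcases Finset.mem_insert.mp hf with rfl | hf'
              · exact absurd hfe.symm h2
              · exact Or.inl ⟨f, hf', hfe⟩
            · exact Or.inr (rtg_of_insert (fun f hf => (hD' f hf).1) hba h1 hr)
          · exact blocked_mono (Finset.subset_insert _ _)
        by_cases hc : (∃ f ∈ D', f.2 = e2) ∨
            Relation.ReflTransGen (fun p q => (p, q) ∈ D') e2 e1
        · -- rejected in both
          have hstepD : rstep (insert (b, a) D') (e1, e2) = insert (b, a) D' :=
            rstep_pos (hcond.mpr hc)
          have hstepD' : rstep D' (e1, e2) = D' := rstep_pos hc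
          rw [List.foldl_cons, hstepD, hfilt, List.foldl_cons, hstepD']
          refine ih D' hD' (List.pairwise_cons.mp hpw).2
            (fun f hf => hne f (List.mem_cons_of_mem _ hf))
            (fun z hz => hm z (List.mem_cons_of_mem _ hz)) ?_
          intro z hz
          rcases h4 z (List.mem_cons_of_mem _ hz) with hbz | hbl
          · rcases List.mem_cons.mp hbz with heq | hmem
            · -- (b,z) = (e1,e2); use the rejection condition
              have hb1 : b = e1 := congrArg Prod.fst heq
              have hz2 : z = e2 := congrArg Prod.snd heq
              subst z
              rcases hcond.mpr hc with hin | hr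
              · exact Or.inr (Or.inl hin)
              · refine Or.inr (Or.inr ?_)
                rw [← hb1] at hr
                exact hr.tail hmemD
            · exact Or.inl hmem
          · exact Or.inr hbl
        · -- added in both
          have hstepD : rstep (insert (b, a) D') (e1, e2) =
              insert (e1, e2) (insert (b, a) D') :=
            rstep_neg (fun h => hc (hcond.mp h))
          have hstepD' : rstep D' (e1, e2) = insert (e1, e2) D' := rstep_neg hc
          rw [List.foldl_cons, hstepD, hfilt, List.foldl_cons, hstepD',
            Finset.insert_comm]
          refine ih (insert (e1, e2) D') ?_ (List.pairwise_cons.mp hpw).2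
            (fun f hf => hne f (List.mem_cons_of_mem _ hf))
            (fun z hz => hm z (List.mem_cons_of_mem _ hz)) ?_
          · intro f hf
            rcases Finset.mem_insert.mp hf with rfl | hf'
            · exact ⟨h1, h2⟩
            · exact hD' f hf'
          · intro z hz
            rcases h4 z (List.mem_cons_of_mem _ hz) with hbz | hbl
            · rcases List.mem_cons.mp hbz with heq | hmem
              · have hz2 : z = e2 := congrArg Prod.snd heq
                subst z
                exact Or.inr (Or.inl ⟨(e1, e2),
                  Finset.mem_insert_of_mem (Finset.mem_insert_self _ _), rfl⟩)
              · exact Or.inl hmem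
            · refine Or.inr (blocked_mono ?_ hbl)
              rw [Finset.insert_comm]
              exact Finset.subset_insert _ _

lemma river_main {ν : Type} (P P' : Profile ν α) (hUW : P.UniquelyWeighted)
    (a b : α) (ha : a ∈ P.alts) (hb : b ∈ P.alts) (hdom : QuasiParetoDominates P b a)
    (L L' : List (α × α)) (hL : IsTiebreaker P L)
    (hL'n : L'.Nodup)
    (hL'm : ∀ e : α × α, e ∈ L' ↔
      (e.1 ∈ P.alts ∧ e.1 ≠ a) ∧ (e.2 ∈ P.alts ∧ e.2 ≠ a) ∧ e.1 ≠ e.2 ∧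
        0 ≤ P.margin e.1 e.2)
    (hL's : L'.Pairwise (fun e f => P.margin f.1 f.2 ≤ P.margin e.1 e.2))
    (halts : ∀ x, x ∈ P'.alts ↔ x ∈ P.alts ∧ x ≠ a) :
    riverWinners P L = riverWinners P' L' := by
  obtain ⟨⟨hcba, hcov⟩, hqp⟩ := hdom
  have hanti : ∀ x y : α, P.margin x y = -(P.margin y x) := by
    intro x y; unfold Profile.margin; ring
  have hba : b ≠ a := by
    intro h
    rw [h] at hcba
    have h0 : P.margin a a = 0 := by unfold Profile.margin; ring
    omega
  have hLmem := fun (e : α × α) (he : e ∈ L) => (hL.2.1 e).mp he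
  have strict : ∀ M : List (α × α), M.Nodup →
      M.Pairwise (fun e f => P.margin f.1 f.2 ≤ P.margin e.1 e.2) →
      (∀ e ∈ M, e.1 ∈ P.alts ∧ e.2 ∈ P.alts ∧ e.1 ≠ e.2) →
      M.Pairwise (fun e f => P.margin f.1 f.2 < P.margin e.1 e.2) := by
    intro M hnd hs hmem
    refine (hnd.and hs).imp_of_mem ?_
    intro e f he hf h
    obtain ⟨h1, h2, h3⟩ := hmem e he
    obtain ⟨g1, g2, g3⟩ := hmem f hf
    refine lt_of_le_of_ne h.2 (hUW.2 f.1 g1 f.2 g2 e.1 h1 e.2 h2 g3 h3 ?_)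
    simpa using Ne.symm h.1
  have hspw : L.Pairwise (fun e f => P.margin f.1 f.2 < P.margin e.1 e.2) :=
    strict L hL.1 hL.2.2
      (fun e he => ⟨(hLmem e he).1, (hLmem e he).2.1, (hLmem e he).2.2.1⟩)
  have hbaL : ((b, a) : α × α) ∈ L := (hL.2.1 _).mpr ⟨hb, ha, hba, le_of_lt hcba⟩
  obtain ⟨L₁, L₂, hsplit⟩ := List.append_of_mem hbaL
  have hspw2 : (L₁ ++ (b, a) :: L₂).Pairwise
      (fun e f => P.margin f.1 f.2 < P.margin e.1 e.2) := hsplit ▸ hspw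
  obtain ⟨pw₁, pwc, hcross⟩ := List.pairwise_append.mp hspw2
  obtain ⟨hlt₂, pw₂⟩ := List.pairwise_cons.mp pwc
  have hmaj : ∀ z : α, ((a, z) : α × α) ∈ L → P.margin a z < P.margin b z := by
    intro z hz
    obtain ⟨_, hzal, haz, hnn⟩ := hLmem _ hz
    have hnn' : 0 ≤ P.margin a z := hnn
    have hzb : z ≠ b := by
      intro h
      rw [h] at hnn'
      have := hanti a b
      omega
    have hle := hcov z hzal (Ne.symm haz) hzb
    refine lt_of_le_of_ne hle
      (hUW.2 a ha z hzal b hb z hzal haz (fun h => hzb h.symm) ?_)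
    intro h
    exact hba (congrArg Prod.fst h).symm
  have hL₁ : ∀ e ∈ L₁, e.1 ≠ a ∧ e.2 ≠ a := by
    intro e he
    have heL : e ∈ L := hsplit ▸ List.mem_append_left _ he
    obtain ⟨h1, h2, h3, h4⟩ := hLmem e heL
    have hlt : P.margin b a < P.margin e.1 e.2 :=
      hcross e he (b, a) (List.mem_cons_self)
    constructor
    · intro hea
      by_cases hz : e.2 = b
      · have := hanti a b
        rw [hea, hz] at h4
        omega
      · have hqa := (hqp e.2 h2 (fun h => h3 (hea.trans h.symm)) hz).2
        rw [hea] at hlt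
        omega
    · intro hea2
      by_cases hz : e.1 = b
      · rw [hz, hea2] at hlt
        omega
      · have hqa := (hqp e.1 h1 (fun h => h3 (h.trans hea2.symm)) hz).1
        rw [hea2] at hlt
        omega
  have hD₁ : ∀ f ∈ L₁.foldl rstep (∅ : Finset (α × α)), f.1 ≠ a ∧ f.2 ≠ a := by
    intro f hf
    rcases mem_foldl _ _ _ hf with h | h
    · exact absurd h (Finset.notMem_empty f)
    · exact hL₁ f h
  have hbstep : rstep (L₁.foldl rstep ∅) (b, a) = insert (b, a) (L₁.foldl rstep ∅) := by
    refine rstep_neg ?_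
    rintro (⟨f, hf, hfa⟩ | hr)
    · exact (hD₁ f hf).2 hfa
    · exact hba (no_path (fun f hf => (hD₁ f hf).1) hr)
  have h4₂ : ∀ z, ((a, z) : α × α) ∈ L₂ →
      (b, z) ∈ L₂ ∨ (∃ f ∈ insert (b, a) (L₁.foldl rstep ∅), f.2 = z) ∨
        Relation.ReflTransGen
          (fun p q => (p, q) ∈ insert (b, a) (L₁.foldl rstep ∅)) z a := by
    intro z hz
    have hzL : ((a, z) : α × α) ∈ L :=
      hsplit ▸ List.mem_append_right _ (List.mem_cons_of_mem _ hz)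
    obtain ⟨_, hzal, haz, hnn⟩ := hLmem _ hzL
    have hnn' : 0 ≤ P.margin a z := hnn
    have hzb : b ≠ z := by
      intro h
      rw [← h] at hnn'
      have := hanti a b
      omega
    have hbzL : ((b, z) : α × α) ∈ L :=
      (hL.2.1 _).mpr ⟨hb, hzal, hzb, le_trans hnn' (le_of_lt (hmaj z hzL))⟩
    rw [hsplit] at hbzL
    rcases List.mem_append.mp hbzL with h1 | h1
    · rcases processed L₁ ∅ _ h1 with ⟨f, hf, hfz⟩ | hr
      · exact Or.inr (Or.inl ⟨f, Finset.mem_insert_of_mem hf, hfz⟩)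
      · refine Or.inr (Or.inr ?_)
        exact (Relation.ReflTransGen.mono (fun p q hpq => Finset.mem_insert_of_mem hpq) _ _ hr).tail
          (Finset.mem_insert_self _ _)
    · rcases List.mem_cons.mp h1 with heq | h2
      · exact absurd (congrArg Prod.snd heq) (Ne.symm haz)
      · exact Or.inl h2
  have hmain := main_fold (fun e => P.margin e.1 e.2) a b hba L₂
    (L₁.foldl rstep ∅) hD₁ pw₂
    (fun e he =>
      (hLmem e (hsplit ▸ List.mem_append_right _ (List.mem_cons_of_mem _ he))).2.2.1)
    (fun z hz => hmaj z (hsplit ▸ List.mem_append_right _ (List.mem_cons_of_mem _ hz)))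
    h4₂
  have hfL : L.filter (fun e => decide (e.1 ≠ a ∧ e.2 ≠ a)) =
      L₁ ++ L₂.filter (fun e => decide (e.1 ≠ a ∧ e.2 ≠ a)) := by
    rw [hsplit, List.filter_append]
    congr 1
    · exact List.filter_eq_self.mpr fun e he => by simpa using hL₁ e he
    · simp [List.filter_cons]
  have hLeq : L' = L.filter (fun e => decide (e.1 ≠ a ∧ e.2 ≠ a)) := by
    have hnd2 : (L.filter (fun e => decide (e.1 ≠ a ∧ e.2 ≠ a))).Nodup := hL.1.filter _
    have hmem2 : ∀ e : α × α, e ∈ L' ↔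
        e ∈ L.filter (fun e => decide (e.1 ≠ a ∧ e.2 ≠ a)) := by
      intro e
      rw [List.mem_filter, hL'm e, hL.2.1 e]
      simp only [decide_eq_true_eq]
      tauto
    have hsort1 : L'.Pairwise (fun e f => P.margin f.1 f.2 < P.margin e.1 e.2) :=
      strict L' hL'n hL's (fun e he => by
        obtain ⟨⟨h1, _⟩, ⟨h2, _⟩, h3, _⟩ := (hL'm e).mp he
        exact ⟨h1, h2, h3⟩)
    have hsort2 : (L.filter (fun e => decide (e.1 ≠ a ∧ e.2 ≠ a))).Pairwise
        (fun e f => P.margin f.1 f.2 < P.margin e.1 e.2) :=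
      hspw.sublist List.filter_sublist
    haveI : IsAntisymm (α × α) (fun e f => P.margin f.1 f.2 < P.margin e.1 e.2) :=
      ⟨fun e f h1 h2 => absurd h2 (not_lt.mpr (le_of_lt h1))⟩
    exact List.Perm.eq_of_pairwise (fun e f _ _ h1 h2 => absurd h2 (not_lt.mpr (le_of_lt h1)))
      hsort1 hsort2 ((List.perm_ext_iff_of_nodup hL'n hnd2).mpr hmem2)
  have hdiag : riverDiagram L = insert (b, a) (riverDiagram L') := by
    rw [riverDiagram_eq_foldl, riverDiagram_eq_foldl, hLeq, hfL, hsplit,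
      List.foldl_append, List.foldl_append, List.foldl_cons, hbstep, hmain]
  ext x
  simp only [riverWinners, Finset.mem_filter]
  constructor
  · rintro ⟨hx, hno⟩
    have hxa : x ≠ a := by
      intro h
      exact hno (b, a) (by rw [hdiag]; exact Finset.mem_insert_self _ _) h.symm
    exact ⟨(halts x).mpr ⟨hx, hxa⟩,
      fun f hf => hno f (by rw [hdiag]; exact Finset.mem_insert_of_mem hf)⟩
  · rintro ⟨hx, hno⟩
    obtain ⟨hxP, hxa⟩ := (halts x).mp hx
    refine ⟨hxP, fun f hf => ?_⟩
    rw [hdiag] at hf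
    rcases Finset.mem_insert.mp hf with rfl | hf'
    · exact Ne.symm hxa
    · exact hno f hf'

end RiverAux

theorem river_IQDA_uniquelyWeighted {ν α : Type} [DecidableEq α]
    (P : Profile ν α) (hP : P.Valid) (hUW : P.UniquelyWeighted)
    (a b : α) (ha : a ∈ P.alts) (hb : b ∈ P.alts) (hdom : QuasiParetoDominates P b a)
    (L L' : List (α × α)) (hL : IsTiebreaker P L) (hL' : IsTiebreaker (P.restrict a) L') :
    riverWinners P L = riverWinners (P.restrict a) L' := by
  refine river_main P (P.restrict a) hUW a b ha hb hdom L L' hL hL'.1 ?_ hL'.2.2 ?_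
  · intro e
    rw [hL'.2.1 e]
    simp only [Profile.restrict, Profile.margin, Finset.mem_erase]
    tauto
  · intro x
    simp only [Profile.restrict, Finset.mem_erase]
    tauto
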